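/- For every prime p and every positive integer n divisible by p, K(n,p) ≥ p^n · ((n/p)!)^p / n!. Consequently, for every fixed prime p, as n tends to infinity, K(n,p) ≥ (1+o(1)) · ((2π)^{(p-1)/2} / p^{p/2}) · n^{(p-1)/2}. -/

import Mathlib

open scoped Real

/-- `u` is a vector all of whose coordinates are powers of the primitive `p`-th root of unity
`w = e^{2πi/p}`, i.e. a member of the set `B`. -/
def IsRootVector (p n : ℕ) (u : Fin n → ℂ) : Prop :=
  ∀ i, ∃ j < p, u i = Complex.exp (2 * Real.pi * Complex.I / p) ^ j

/-- `K(n,p)`: the minimum `k` such that there are `v_1, …, v_k ∈ B` so that every `u ∈ B` is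
orthogonal (with respect to the bilinear scalar product) to some `v_j`. -/
noncomputable def balancingNumber (n p : ℕ) : ℕ :=
  sInf {k | ∃ v : Fin k → Fin n → ℂ,
    (∀ j, IsRootVector p n (v j)) ∧
    ∀ u : Fin n → ℂ, IsRootVector p n u → ∃ j, ∑ i, v j i * u i = 0}


open Polynomial Finset

noncomputable def zet (p : ℕ) : ℂ := Complex.exp (2 * Real.pi * Complex.I / p)

lemma zet_prim (p : ℕ) (hp : p ≠ 0) : IsPrimitiveRoot (zet p) p :=
  Complex.isPrimitiveRoot_exp p hp

lemma zmod_sum_range {p : ℕ} [NeZero p] (F : ZMod p → ℂ) :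
    ∑ s : ZMod p, F s = ∑ t ∈ Finset.range p, F t := by
  refine Finset.sum_nbij' (fun s => s.val) (fun t => (t : ZMod p)) ?_ ?_ ?_ ?_ ?_
  · intro a _; exact Finset.mem_range.2 (ZMod.val_lt a)
  · intro t _; exact Finset.mem_univ _
  · intro a _; exact ZMod.natCast_zmod_val a
  · intro t ht; exact ZMod.val_natCast_of_lt (Finset.mem_range.1 ht)
  · intro a _; rw [ZMod.natCast_zmod_val a]

lemma fiber_card {p n : ℕ} (hp : p.Prime) (c : Fin n → ZMod p)
    (h0 : ∑ i, zet p ^ (c i).val = 0) (r : ZMod p) :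
    (Finset.univ.filter (fun i => c i = r)).card = n / p := by
  haveI : Fact p.Prime := ⟨hp⟩
  set d : ZMod p → ℕ := fun r => (Finset.univ.filter (fun i => c i = r)).card with hd
  have hsum : ∑ s : ZMod p, (d s : ℂ) * zet p ^ s.val = 0 := by
    rw [← h0]
    have : ∑ i : Fin n, zet p ^ (c i).val
        = ∑ s : ZMod p, ∑ i ∈ Finset.univ.filter (fun i => c i = s), zet p ^ (c i).val := by
      rw [Finset.sum_fiberwise_eq_sum_filter]; simp
    rw [this]
    refine Finset.sum_congr rfl fun s _ => ?_
    rw [Finset.sum_congr rfl (fun i hi => ?_), Finset.sum_const, nsmul_eq_mul]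
    simp only [Finset.mem_filter] at hi
    rw [hi.2]
  have hsum' : ∑ t ∈ Finset.range p, (d (t : ZMod p) : ℂ) * zet p ^ t = 0 := by
    rw [← hsum, zmod_sum_range (fun s => (d s : ℂ) * zet p ^ s.val)]
    refine Finset.sum_congr rfl fun t ht => ?_
    rw [ZMod.val_natCast_of_lt (Finset.mem_range.1 ht)]
  -- the polynomial with coefficients d
  set f : ℚ[X] := ∑ t ∈ Finset.range p, Polynomial.C ((d (t : ZMod p) : ℚ)) * X ^ t with hf
  have hcoeff : ∀ t < p, f.coeff t = (d (t : ZMod p) : ℚ) := by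
    intro t ht
    rw [hf, Polynomial.finset_sum_coeff]
    simp only [Polynomial.coeff_C_mul, Polynomial.coeff_X_pow]
    rw [Finset.sum_eq_single t]
    · simp
    · intro b _ hb; simp [Ne.symm hb]
    · intro h; exact absurd (Finset.mem_range.2 ht) h
  have hζ : IsPrimitiveRoot (zet p) p := zet_prim p hp.ne_zero
  have haev : Polynomial.aeval (zet p) f = 0 := by
    rw [hf]
    simp only [map_sum, map_mul, Polynomial.aeval_C, Polynomial.aeval_X_pow]
    simpa using hsum'
  have hint : IsIntegral ℚ (zet p) := (hζ.isIntegral hp.pos).tower_top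
  have hdvd : minpoly ℚ (zet p) ∣ f := minpoly.dvd ℚ _ haev
  have hmin : minpoly ℚ (zet p) = ∑ i ∈ Finset.range p, (X : ℚ[X]) ^ i := by
    rw [← Polynomial.cyclotomic_eq_minpoly_rat hζ hp.pos, Polynomial.cyclotomic_prime]
  -- degree considerations
  have hdegf : f.natDegree ≤ p - 1 := by
    rw [hf]
    refine (Polynomial.natDegree_sum_le _ _).trans ?_
    rw [Finset.fold_max_le]
    refine ⟨Nat.zero_le _, fun t ht => ?_⟩
    exact (Polynomial.natDegree_C_mul_le _ _).trans
      ((Polynomial.natDegree_X_pow_le t).trans (Nat.le_sub_one_of_lt (Finset.mem_range.1 ht)))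
  have hdegm : (minpoly ℚ (zet p)).natDegree = p - 1 := by
    rw [← Polynomial.cyclotomic_eq_minpoly_rat hζ hp.pos, Polynomial.natDegree_cyclotomic,
      Nat.totient_prime hp]
  -- all d equal
  obtain ⟨q, hq⟩ := hdvd
  have hall : ∀ t < p, f.coeff t = f.coeff 0 := by
    rcases eq_or_ne q 0 with h | h
    · intro t _; rw [hq, h, mul_zero]; simp
    · have hfne : f ≠ 0 := by
        rw [hq]
        exact mul_ne_zero (minpoly.ne_zero hint) h
      have : (minpoly ℚ (zet p)).natDegree + q.natDegree = f.natDegree := by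
        rw [hq, Polynomial.natDegree_mul (minpoly.ne_zero hint) h]
      have hq0 : q.natDegree = 0 := by omega
      obtain ⟨cq, rfl⟩ := Polynomial.natDegree_eq_zero.1 hq0
      intro t ht
      rw [hq, hmin]
      rw [mul_comm, Polynomial.coeff_C_mul, Polynomial.coeff_C_mul]
      congr 1
      rw [Polynomial.finset_sum_coeff, Polynomial.finset_sum_coeff]
      simp only [Polynomial.coeff_X_pow]
      rw [Finset.sum_eq_single t, Finset.sum_eq_single 0]
      · simp
      · intro b _ hb; simp [Ne.symm hb]
      · intro h; exact absurd (Finset.mem_range.2 hp.pos) h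
      · intro b _ hb; simp [Ne.symm hb]
      · intro h; exact absurd (Finset.mem_range.2 ht) h
  have hdall : ∀ s : ZMod p, d s = d 0 := by
    intro s
    have := hall s.val (ZMod.val_lt s)
    rw [hcoeff _ (ZMod.val_lt s), hcoeff 0 hp.pos, ZMod.natCast_zmod_val] at this
    exact_mod_cast by simpa using this
  have htot : ∑ s : ZMod p, d s = n := by
    rw [hd]
    rw [← Finset.card_eq_sum_card_fiberwise (fun i _ => Finset.mem_univ (c i))]
    simp
  have : p * d 0 = n := by
    rw [← htot, Finset.sum_congr rfl (fun s _ => hdall s), Finset.sum_const, smul_eq_mul]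
    simp [ZMod.card]
  have hd0 : d 0 = n / p := by rw [← this, Nat.mul_div_cancel_left _ hp.pos]
  have := hdall r
  rw [hd0] at this
  exact this

lemma zet_pow_mod (p a : ℕ) (hp : p ≠ 0) : zet p ^ (a % p) = zet p ^ a := by
  conv_rhs => rw [← Nat.div_add_mod a p]
  rw [pow_add, pow_mul, (zet_prim p hp).pow_eq_one, one_pow, one_mul]

lemma zet_pow_add {p : ℕ} (hp : p ≠ 0) (x y : ZMod p) :
    zet p ^ (x + y).val = zet p ^ x.val * zet p ^ y.val := by
  haveI : NeZero p := ⟨hp⟩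
  rw [ZMod.val_add, zet_pow_mod p _ hp, pow_add]

/-- rank of `i` within its fiber -/
def rnk {p n : ℕ} (c : Fin n → ZMod p) (i : Fin n) : ℕ :=
  (Finset.univ.filter (fun j => c j = c i ∧ j < i)).card

lemma rnk_lt {p n : ℕ} (hp : p.Prime) (c : Fin n → ZMod p)
    (h0 : ∑ i, zet p ^ (c i).val = 0) (i : Fin n) : rnk c i < n / p := by
  rw [← fiber_card hp c h0 (c i)]
  refine Finset.card_lt_card ?_
  constructor
  · intro j hj
    simp only [Finset.mem_filter] at hj ⊢
    exact ⟨hj.1, hj.2.1⟩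
  · intro hsub
    have := hsub (Finset.mem_filter.2 ⟨Finset.mem_univ i, rfl⟩)
    simp only [Finset.mem_filter] at this
    exact absurd this.2.2 (lt_irrefl i)

lemma rnk_injOn {p n : ℕ} (c : Fin n → ZMod p) {i i' : Fin n}
    (hc : c i = c i') (hr : rnk c i = rnk c i') : i = i' := by
  rcases lt_trichotomy i i' with h | h | h
  · exfalso
    have : rnk c i < rnk c i' := by
      refine Finset.card_lt_card ?_
      constructor
      · intro j hj
        simp only [Finset.mem_filter] at hj ⊢
        exact ⟨hj.1, hc ▸ hj.2.1, hj.2.2.trans h⟩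
      · intro hsub
        have := hsub (Finset.mem_filter.2 ⟨Finset.mem_univ i, hc, h⟩)
        simp only [Finset.mem_filter] at this
        exact absurd this.2.2 (lt_irrefl i)
    omega
  · exact h
  · exfalso
    have : rnk c i' < rnk c i := by
      refine Finset.card_lt_card ?_
      constructor
      · intro j hj
        simp only [Finset.mem_filter] at hj ⊢
        exact ⟨hj.1, hc ▸ hj.2.1, hj.2.2.trans h⟩
      · intro hsub
        have := hsub (Finset.mem_filter.2 ⟨Finset.mem_univ i', hc.symm, h⟩)
        simp only [Finset.mem_filter] at this
        exact absurd this.2.2 (lt_irrefl i')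
    omega

lemma key_count {p n : ℕ} (hp : p.Prime) (hn : 0 < n) (hpn : p ∣ n) {k : ℕ}
    (v : Fin k → Fin n → ℂ) (hv : ∀ j, IsRootVector p n (v j))
    (hcov : ∀ u, IsRootVector p n u → ∃ j, ∑ i, v j i * u i = 0) :
    p ^ n * ((n / p).factorial) ^ p ≤ k * n.factorial := by
  haveI : Fact p.Prime := ⟨hp⟩
  set m := n / p with hm
  have hζ : IsPrimitiveRoot (zet p) p := zet_prim p hp.ne_zero
  -- exponents of the `v j`
  have hb : ∀ j i, ∃ x : ZMod p, v j i = zet p ^ x.val := by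
    intro j i
    obtain ⟨e, he, hve⟩ := hv j i
    exact ⟨(e : ZMod p), by rw [hve, ZMod.val_natCast_of_lt he]; rfl⟩
  choose b hbv using hb
  -- each exponent vector `a` gives a root vector
  have hu : ∀ a : Fin n → ZMod p, IsRootVector p n (fun i => zet p ^ (a i).val) := by
    intro a i
    exact ⟨(a i).val, ZMod.val_lt _, rfl⟩
  have hcov' : ∀ a : Fin n → ZMod p, ∃ j, ∑ i, zet p ^ ((a i + b j i).val) = 0 := by
    intro a
    obtain ⟨j, hj⟩ := hcov _ (hu a)
    refine ⟨j, ?_⟩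
    rw [← hj]
    refine Finset.sum_congr rfl fun i _ => ?_
    rw [zet_pow_add hp.ne_zero, mul_comm, hbv]
  choose cov hcov2 using hcov'
  -- the injection
  set F : ((Fin n → ZMod p) × (ZMod p → Equiv.Perm (Fin m))) →
      (Fin k × (Fin n ↪ (ZMod p × Fin m))) := fun x =>
    let j := cov x.1
    let c := fun i => x.1 i + b j i
    have hbal := hcov2 x.1
    ⟨j, ⟨fun i => (c i, x.2 (c i) ⟨rnk c i, rnk_lt hp c hbal i⟩),
      by
        intro i i' hii
        simp only [Prod.mk.injEq] at hii
        have hc : c i = c i' := hii.1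
        apply rnk_injOn c hc
        have := hii.2
        rw [hc] at this
        have := (x.2 (c i')).injective this
        exact congrArg Fin.val this⟩⟩
  have hF : Function.Injective F := by
    rintro ⟨a, prm1⟩ ⟨a', prm2⟩ h
    simp only [F, Prod.mk.injEq] at h
    obtain ⟨hj, hg⟩ := h
    have hgf := congrArg (fun (g : Fin n ↪ (ZMod p × Fin m)) => (g : Fin n → ZMod p × Fin m)) hg
    -- first components give a = a'
    have hc : ∀ i, a i + b (cov a) i = a' i + b (cov a') i := by
      intro i
      have := congrFun hgf i
      exact (Prod.ext_iff.1 this).1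
    have ha : a = a' := by
      funext i
      have := hc i
      rw [hj] at this
      exact add_right_cancel this
    subst ha
    refine Prod.ext rfl ?_
    -- second components give π = prm2
    funext r
    ext s
    -- find i in fiber r with rank s
    set c := fun i => a i + b (cov a) i with hcdef
    have hbal := hcov2 a
    have hfib : (Finset.univ.filter (fun i => c i = r)).card = m := fiber_card hp c hbal r
    have hsurj := Finset.surj_on_of_inj_on_of_card_le
      (s := Finset.univ.filter (fun i => c i = r)) (t := (Finset.univ : Finset (Fin m)))
      (fun i _ => (⟨rnk c i, rnk_lt hp c hbal i⟩ : Fin m))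
      (fun i _ => Finset.mem_univ _)
      (fun i i' hi hi' hrr => by
        simp only [Finset.mem_filter] at hi hi'
        exact rnk_injOn c (hi.2.trans hi'.2.symm) (congrArg Fin.val hrr))
      (by rw [hfib]; simp)
    obtain ⟨i, hi, his⟩ := hsurj s (Finset.mem_univ s)
    simp only [Finset.mem_filter] at hi
    have h2 := (Prod.ext_iff.1 (congrFun hgf i)).2
    rw [← hi.2, his]
    exact congrArg Fin.val h2
  -- count
  have hcard := Fintype.card_le_of_injective F hF
  rw [Fintype.card_prod, Fintype.card_prod, Fintype.card_fun, Fintype.card_fun] at hcard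
  simp only [ZMod.card, Fintype.card_fin, Fintype.card_perm, Fintype.card_embedding_eq,
    Fintype.card_prod, ZMod.card, Fintype.card_fin] at hcard
  have hpm : p * m = n := Nat.mul_div_cancel' hpn
  rw [hpm, Nat.descFactorial_self] at hcard
  simpa [Fintype.card_fin] using hcard

lemma exists_cover {p n : ℕ} (hp : p.Prime) (hpn : p ∣ n) :
    ∃ k, ∃ v : Fin k → Fin n → ℂ,
      (∀ j, IsRootVector p n (v j)) ∧
      ∀ u, IsRootVector p n u → ∃ j, ∑ i, v j i * u i = 0 := by
  haveI : Fact p.Prime := ⟨hp⟩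
  have hζ : IsPrimitiveRoot (zet p) p := zet_prim p hp.ne_zero
  set e := (Fintype.equivFin (Fin n → ZMod p)).symm
  refine ⟨_, fun j i => zet p ^ ((e j) i).val, ?_, ?_⟩
  · intro j i; exact ⟨_, ZMod.val_lt _, rfl⟩
  · intro u hu
    choose a ha hua using hu
    set w : Fin n → ZMod p := fun i => ((i : ℕ) : ZMod p) - ((a i : ℕ) : ZMod p) with hw
    refine ⟨e.symm w, ?_⟩
    simp only [Equiv.apply_symm_apply]
    have hterm : ∀ i : Fin n, zet p ^ (w i).val * u i = zet p ^ (i : ℕ) := by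
      intro i
      rw [hua i, show (Complex.exp (2 * (Real.pi:ℂ) * Complex.I / p) : ℂ) = zet p from rfl,
        show (zet p) ^ (a i) = zet p ^ (((a i : ℕ) : ZMod p)).val by
          rw [ZMod.val_natCast_of_lt (ha i)],
        ← zet_pow_add hp.ne_zero,
        show w i + ((a i : ℕ) : ZMod p) = ((i : ℕ) : ZMod p) by rw [hw]; ring,
        ZMod.val_natCast, zet_pow_mod p _ hp.ne_zero]
    rw [Finset.sum_congr rfl (fun i _ => hterm i),
      Fin.sum_univ_eq_sum_range (fun t => zet p ^ t) n,
      geom_sum_eq (hζ.ne_one hp.one_lt)]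
    obtain ⟨t, rfl⟩ := hpn
    rw [pow_mul, hζ.pow_eq_one, one_pow, sub_self, zero_div]


lemma part1 {p n : ℕ} (hp : p.Prime) (hn : 0 < n) (hpn : p ∣ n) :
    (p : ℝ) ^ n * ((n / p).factorial : ℝ) ^ p / (n.factorial : ℝ) ≤
      (balancingNumber n p : ℝ) := by
  have hne : {k | ∃ v : Fin k → Fin n → ℂ,
      (∀ j, IsRootVector p n (v j)) ∧
      ∀ u : Fin n → ℂ, IsRootVector p n u → ∃ j, ∑ i, v j i * u i = 0}.Nonempty := by
    obtain ⟨k, v, h1, h2⟩ := exists_cover hp hpn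
    exact ⟨k, v, h1, h2⟩
  obtain ⟨v, hv, hcov⟩ := Nat.sInf_mem hne
  have hkey := key_count hp hn hpn v hv hcov
  rw [div_le_iff₀ (by positivity : (0:ℝ) < (n.factorial : ℝ))]
  exact_mod_cast hkey

open Stirling in
lemma s_pos {t : ℕ} (ht : 0 < t) : 0 < stirlingSeq t := by
  obtain ⟨u, rfl⟩ : ∃ u, t = u + 1 := ⟨t - 1, (Nat.succ_pred_eq_of_pos ht).symm⟩
  exact stirlingSeq'_pos u

open Stirling in
lemma fact_eq {t : ℕ} (ht : 0 < t) :
    (t.factorial : ℝ) = stirlingSeq t * (Real.sqrt (2 * t) * ((t : ℝ) / Real.exp 1) ^ t) := by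
  rw [stirlingSeq]
  have h : (Real.sqrt (2 * t) * ((t : ℝ) / Real.exp 1) ^ t) ≠ 0 := by
    have : (0:ℝ) < t := by exact_mod_cast ht
    positivity
  field_simp

open Stirling in
lemma ratio_eq {p m : ℕ} (hp : 0 < p) (hm : 0 < m) :
    (p : ℝ) ^ (p * m) * ((m.factorial : ℝ)) ^ p / (((p * m).factorial : ℝ))
      = (stirlingSeq m ^ p / stirlingSeq (p * m)) *
        (Real.sqrt (2 * m) ^ p / Real.sqrt (2 * (p * m))) := by
  have hpm : 0 < p * m := Nat.mul_pos hp hm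
  rw [fact_eq hm, fact_eq hpm]
  have hmr : (0:ℝ) < m := by exact_mod_cast hm
  have hpmr : (0:ℝ) < (p*m : ℕ) := by exact_mod_cast hpm
  have h1 : ((stirlingSeq m * (Real.sqrt (2 * m) * ((m : ℝ) / Real.exp 1) ^ m))) ^ p
      = stirlingSeq m ^ p * (Real.sqrt (2 * m) ^ p * ((m : ℝ) / Real.exp 1) ^ (p * m)) := by
    rw [mul_pow, mul_pow, ← pow_mul, mul_comm m p]
  rw [h1]
  have h2 : (p : ℝ) ^ (p * m) * ((m : ℝ) / Real.exp 1) ^ (p * m)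
      = (((p * m : ℕ) : ℝ) / Real.exp 1) ^ (p * m) := by
    rw [← mul_pow]
    congr 1
    push_cast
    ring
  have hd1 : stirlingSeq (p * m) * Real.sqrt (2 * ((p:ℝ)*(m:ℝ))) ≠ 0 :=
    mul_ne_zero (ne_of_gt (s_pos hpm)) (ne_of_gt (Real.sqrt_pos.2 (by push_cast at hpmr ⊢; linarith)))
  have hd2 : stirlingSeq (p * m) *
      (Real.sqrt (2 * ((p*m : ℕ):ℝ)) * (((p*m : ℕ):ℝ) / Real.exp 1) ^ (p*m)) ≠ 0 :=
    mul_ne_zero (ne_of_gt (s_pos hpm)) (ne_of_gt (mul_pos (Real.sqrt_pos.2 (by linarith))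
      (pow_pos (div_pos hpmr (Real.exp_pos 1)) _)))
  rw [div_mul_div_comm, eq_div_iff hd1, div_mul_eq_mul_div, div_eq_iff hd2]
  push_cast at h2 ⊢
  linear_combination (stirlingSeq m ^ p * Real.sqrt (2*(m:ℝ)) ^ p * stirlingSeq (p*m) *
    Real.sqrt (2*(p:ℝ)*(m:ℝ))) * h2

lemma sqrt_ratio (p : ℕ) (n : ℝ) (hp : 0 < p) (hn : 0 < n) :
    Real.sqrt (2 * (n / p)) ^ p / Real.sqrt (2 * n)
      = 2 ^ (((p : ℝ) - 1) / 2) * n ^ (((p : ℝ) - 1) / 2) / (p : ℝ) ^ ((p : ℝ) / 2) := by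
  have hpr : (0:ℝ) < p := by exact_mod_cast hp
  have h2n : (0:ℝ) < 2 * n := by linarith
  have hnp : (0:ℝ) < 2 * (n / p) := by positivity
  rw [Real.sqrt_eq_rpow, Real.sqrt_eq_rpow]
  rw [← Real.rpow_natCast ((2 * (n / p)) ^ ((1:ℝ)/2)) p, ← Real.rpow_mul hnp.le]
  rw [show (1:ℝ)/2 * (p:ℕ) = (p:ℝ)/2 by push_cast; ring]
  rw [show 2 * (n / p) = (2 * n) / (p:ℝ) by ring]
  rw [Real.div_rpow h2n.le hpr.le]
  rw [div_div, mul_comm ((p:ℝ) ^ ((p:ℝ)/2)) _, ← div_div]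
  rw [← Real.rpow_sub h2n]
  rw [show (p:ℝ)/2 - 1/2 = ((p:ℝ) - 1)/2 by ring]
  rw [Real.mul_rpow (by norm_num) hn.le]

open Stirling Filter in
lemma s_lim {p : ℕ} (hp : 0 < p) :
    Tendsto (fun m => stirlingSeq m ^ p / stirlingSeq (p * m)) atTop
      (nhds (Real.pi ^ (((p : ℝ) - 1) / 2))) := by
  have h1 := tendsto_stirlingSeq_sqrt_pi
  have h2 : Tendsto (fun m => stirlingSeq (p * m)) atTop (nhds (Real.sqrt Real.pi)) :=
    h1.comp (tendsto_atTop_mono (fun m => Nat.le_mul_of_pos_left m hp) tendsto_id)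
  have h3 : Tendsto (fun m => stirlingSeq m ^ p / stirlingSeq (p * m)) atTop
      (nhds (Real.sqrt Real.pi ^ p / Real.sqrt Real.pi)) :=
    (h1.pow p).div h2 (ne_of_gt (Real.sqrt_pos.2 Real.pi_pos))
  convert h3 using 2
  rw [Real.sqrt_eq_rpow, ← Real.rpow_natCast (Real.pi ^ ((1:ℝ)/2)) p,
    ← Real.rpow_mul Real.pi_pos.le, ← Real.rpow_sub Real.pi_pos]
  congr 1
  push_cast
  ring

open Stirling Filter in
lemma part2 {p : ℕ} (hp : p.Prime) {ε : ℝ} (hε : 0 < ε) :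
    ∃ N : ℕ, ∀ n : ℕ, N ≤ n → p ∣ n →
      (1 - ε) * ((2 * Real.pi) ^ (((p : ℝ) - 1) / 2) / (p : ℝ) ^ ((p : ℝ) / 2)) *
        (n : ℝ) ^ (((p : ℝ) - 1) / 2) ≤ (balancingNumber n p : ℝ) := by
  set e := ((p : ℝ) - 1) / 2 with he
  rcases le_or_gt (1 - ε) 0 with h1 | h1
  · refine ⟨0, fun n _ _ => ?_⟩
    refine le_trans (mul_nonpos_of_nonpos_of_nonneg
      (mul_nonpos_of_nonpos_of_nonneg h1 (by positivity)) (by positivity)) ?_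
    exact Nat.cast_nonneg _
  · have hL : 0 < Real.pi ^ e := Real.rpow_pos_of_pos Real.pi_pos e
    have hlt : (1 - ε) * Real.pi ^ e < Real.pi ^ e := by nlinarith
    have hev : ∀ᶠ m in atTop,
        (1 - ε) * Real.pi ^ e < stirlingSeq m ^ p / stirlingSeq (p * m) :=
      (s_lim hp.pos).eventually (eventually_gt_nhds hlt)
    obtain ⟨M, hM⟩ := eventually_atTop.1 hev
    refine ⟨p * (M + 1), fun n hn hpn => ?_⟩
    obtain ⟨m, rfl⟩ := hpn
    have hm1 : M + 1 ≤ m := le_of_mul_le_mul_left hn hp.pos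
    have hm : 0 < m := by omega
    have hn0 : 0 < p * m := Nat.mul_pos hp.pos hm
    refine le_trans ?_ (part1 hp hn0 (Dvd.intro m rfl))
    rw [Nat.mul_div_cancel_left m hp.pos, ratio_eq hp.pos hm]
    have hmr : (0:ℝ) < m := by exact_mod_cast hm
    have hpr : (0:ℝ) < p := by exact_mod_cast hp.pos
    have hsr : Real.sqrt (2 * (m:ℝ)) ^ p / Real.sqrt (2 * ((p:ℝ) * (m:ℝ)))
        = 2 ^ e * ((p:ℝ) * (m:ℝ)) ^ e / (p:ℝ) ^ ((p:ℝ)/2) := by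
      have h := sqrt_ratio p ((p:ℝ) * (m:ℝ)) hp.pos (by positivity)
      rw [show ((p:ℝ) * (m:ℝ)) / (p:ℝ) = (m:ℝ) by field_simp] at h
      exact h
    have hg := hM m (by omega)
    have hcast : ((p * m : ℕ) : ℝ) = (p:ℝ) * (m:ℝ) := by push_cast; ring
    calc (1 - ε) * ((2 * Real.pi) ^ e / (p:ℝ) ^ ((p:ℝ)/2)) * ((p * m : ℕ) : ℝ) ^ e
        = ((1 - ε) * Real.pi ^ e) * (2 ^ e * ((p:ℝ) * (m:ℝ)) ^ e / (p:ℝ) ^ ((p:ℝ)/2)) := by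
          rw [hcast, Real.mul_rpow (by norm_num) Real.pi_pos.le]; ring
      _ ≤ (stirlingSeq m ^ p / stirlingSeq (p * m)) *
            (2 ^ e * ((p:ℝ) * (m:ℝ)) ^ e / (p:ℝ) ^ ((p:ℝ)/2)) :=
          mul_le_mul_of_nonneg_right hg.le (by positivity)
      _ = (stirlingSeq m ^ p / stirlingSeq (p * m)) *
            (Real.sqrt (2 * (m:ℝ)) ^ p / Real.sqrt (2 * ((p:ℝ) * (m:ℝ)))) := by rw [hsr]

/-- **Lower bound for `K(n,p)`.** For every prime `p` and `n` divisible by `p`,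
`K(n,p) ≥ pⁿ·((n/p)!)^p / n!`; consequently for fixed prime `p`, as `n → ∞`,
`K(n,p) ≥ (1+o(1))·((2π)^((p-1)/2)/p^(p/2))·n^((p-1)/2)`. -/
theorem balancingNumber_lower_bound :
    (∀ p n : ℕ, p.Prime → 0 < n → p ∣ n →
      (p : ℝ) ^ n * ((n / p).factorial : ℝ) ^ p / (n.factorial : ℝ) ≤
        (balancingNumber n p : ℝ)) ∧
    (∀ p : ℕ, p.Prime → ∀ ε : ℝ, 0 < ε → ∃ N : ℕ, ∀ n : ℕ, N ≤ n → p ∣ n →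
      (1 - ε) * ((2 * Real.pi) ^ (((p : ℝ) - 1) / 2) / (p : ℝ) ^ ((p : ℝ) / 2)) *
        (n : ℝ) ^ (((p : ℝ) - 1) / 2) ≤ (balancingNumber n p : ℝ)) := by
  exact ⟨fun p n hp hn hpn => part1 hp hn hpn, fun p hp ε hε => part2 hp hε⟩
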